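/- Let Σ(i) denote the minimum size of a TWC target set for the subpath L_i^n = {i,…,n−1} that contains both i and n−1. Then for each vertex k of L^n with t(k)=2 there exists an integer Σ_k such that Σ(i) ∈ {Σ_k, Σ_k − 1} for every i with k ≤ i ≤ D[k], where D[k] = min{x > k : t(x)=2}. -/

import Mathlib

set_option linter.unusedVariables false

open Finset

variable {V : Type*} [Fintype V] [DecidableEq V]

/-- `influenced G t lam S r` : set of influenced nodes after round `r`. -/
def influenced (G : SimpleGraph V) [DecidableRel G.Adj] (t : V → ℕ) (lam : ℕ)
    (S : Finset V) : ℕ → Finset V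
  | 0 => S
  | r + 1 =>
    let prev := influenced G t lam S r
    let A := if r + 1 ≤ lam then prev else prev \ influenced G t lam S (r - lam)
    prev ∪ Finset.univ.filter fun v => t v ≤ (G.neighborFinset v ∩ A).card
  termination_by r => r
  decreasing_by all_goals omega

/-- `activeSet G t lam S r` : set of active nodes at round `r`. -/
def activeSet (G : SimpleGraph V) [DecidableRel G.Adj] (t : V → ℕ) (lam : ℕ)
    (S : Finset V) (r : ℕ) : Finset V :=
  if r = 0 then ∅
  else if r ≤ lam then influenced G t lam S (r - 1)
  else influenced G t lam S (r - 1) \ influenced G t lam S (r - 1 - lam)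

def isTargetSet (G : SimpleGraph V) [DecidableRel G.Adj] (t : V → ℕ) (lam : ℕ)
    (S : Finset V) : Prop :=
  ∃ r, influenced G t lam S r = Finset.univ

def pathGraph (n : ℕ) : SimpleGraph (Fin n) where
  Adj i j := i.val + 1 = j.val ∨ j.val + 1 = i.val
  symm := ⟨fun i j h => h.symm⟩
  loopless := ⟨fun i h => by rcases h with h | h <;> omega⟩

instance (n : ℕ) : DecidableRel (pathGraph n).Adj :=
  fun i j => inferInstanceAs (Decidable (i.val + 1 = j.val ∨ j.val + 1 = i.val))

def ringGraph (n : ℕ) : SimpleGraph (Fin n) where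
  Adj i j := i ≠ j ∧ ((i.val + 1) % n = j.val ∨ (j.val + 1) % n = i.val)
  symm := ⟨fun i j h => ⟨h.1.symm, h.2.symm⟩⟩
  loopless := ⟨fun i h => h.1 rfl⟩

instance (n : ℕ) : DecidableRel (ringGraph n).Adj :=
  fun i j => inferInstanceAs (Decidable (_ ∧ (_ ∨ _)))

instance : DecidableRel (⊤ : SimpleGraph V).Adj :=
  fun a b => inferInstanceAs (Decidable (a ≠ b))


/-- `sigmaMin n lam t i hi` : the minimum size of a TWC target set for the
subpath `L_i^n = {i,…,n-1}` that contains both extreme nodes `i` and `n-1`. -/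
noncomputable def sigmaMin (n lam : ℕ) (t : Fin n → ℕ) (i : ℕ) (hi : i < n) : ℕ :=
  sInf { c : ℕ | ∃ S : Finset (Fin (n - i)),
    isTargetSet (pathGraph (n - i))
      (fun k => t ⟨i + (k : ℕ), by have := k.isLt; omega⟩) lam S ∧
    (⟨0, by omega⟩ : Fin (n - i)) ∈ S ∧ (⟨n - i - 1, by omega⟩ : Fin (n - i)) ∈ S ∧
    S.card = c }

/-! ### Auxiliary development -/

lemma influenced_succ (G : SimpleGraph V) [DecidableRel G.Adj] (t : V → ℕ) (lam : ℕ)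
    (S : Finset V) (r : ℕ) :
    influenced G t lam S (r+1) = influenced G t lam S r ∪
      Finset.univ.filter (fun v => t v ≤ (G.neighborFinset v ∩
        (if r + 1 ≤ lam then influenced G t lam S r
         else influenced G t lam S r \ influenced G t lam S (r - lam))).card) := by
  rw [influenced]

lemma mem_nbr {m : ℕ} {v u : Fin m} :
    u ∈ (pathGraph m).neighborFinset v ↔ (u.val + 1 = v.val ∨ v.val + 1 = u.val) := by
  rw [SimpleGraph.mem_neighborFinset]
  constructor
  · rintro (h | h)
    · right; exact h
    · left; exact h
  · rintro (h | h)
    · right; exact h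
    · left; exact h

/-! Combinatorial layer -/

def seg2 (t : ℕ → ℕ) (s s' : ℕ) : Finset ℕ := (Finset.Ioo s s').filter (fun x => t x = 2)

def consec (A : Finset ℕ) (s s' : ℕ) : Prop :=
  s ∈ A ∧ s' ∈ A ∧ s < s' ∧ ∀ x ∈ A, x ≤ s ∨ s' ≤ x

def winOK (lam b s s' : ℕ) : Prop := s + s' < 2*b + lam ∧ 2*b < s + s' + lam

def validPair (t : ℕ → ℕ) (lam s s' : ℕ) : Prop :=
  seg2 t s s' = ∅ ∨ ∃ b, seg2 t s s' = {b} ∧ winOK lam b s s'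

def validSet (t : ℕ → ℕ) (lam : ℕ) (A : Finset ℕ) : Prop :=
  ∀ s s', consec A s s' → validPair t lam s s'

def TS (t : ℕ → ℕ) (lam : ℕ) (A : Finset ℕ) (v a : ℕ) : Prop :=
  (v ∈ A ∧ a = 0) ∨
  (v ∉ A ∧ ∃ s s', consec A s s' ∧ s < v ∧ v < s' ∧
    ((seg2 t s s' = ∅ ∧ a = min (v - s) (s' - v)) ∨
     (∃ b, seg2 t s s' = {b} ∧
       ((v < b ∧ a = v - s) ∨ (b < v ∧ a = s' - v) ∨
        (v = b ∧ winOK lam b s s' ∧ a = max (v - s) (s' - v))))))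

lemma mem_seg2 {t : ℕ → ℕ} {s s' x : ℕ} :
    x ∈ seg2 t s s' ↔ (s < x ∧ x < s' ∧ t x = 2) := by
  simp [seg2, Finset.mem_filter, Finset.mem_Ioo, and_assoc]

lemma consec_unique {A : Finset ℕ} {s1 s1' s2 s2' v : ℕ}
    (h1 : consec A s1 s1') (h2 : consec A s2 s2')
    (ha : s1 < v) (hb : v < s1') (hc : s2 < v) (hd : v < s2') :
    s1 = s2 ∧ s1' = s2' := by
  obtain ⟨m1, m1', lt1, f1⟩ := h1
  obtain ⟨m2, m2', lt2, f2⟩ := h2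
  have e1 := f1 s2 m2
  have e2 := f2 s1 m1
  have e3 := f1 s2' m2'
  have e4 := f2 s1' m1'
  omega

lemma TS_unique {t : ℕ → ℕ} {lam : ℕ} {A : Finset ℕ} {v a a' : ℕ}
    (h : TS t lam A v a) (h' : TS t lam A v a') : a = a' := by
  rcases h with ⟨hv, rfl⟩ | ⟨hv, s, s', hc, hs, hs', hcase⟩
  · rcases h' with ⟨_, rfl⟩ | ⟨hv', _⟩
    · rfl
    · exact absurd hv hv'
  · rcases h' with ⟨hv', _⟩ | ⟨_, s2, s2', hc2, hs2, hs2', hcase2⟩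
    · exact absurd hv' hv
    · obtain ⟨rfl, rfl⟩ : s = s2 ∧ s' = s2' := consec_unique hc hc2 hs hs' hs2 hs2'
      rcases hcase with ⟨he, rfl⟩ | ⟨b, hb, hsub⟩
      · rcases hcase2 with ⟨_, rfl⟩ | ⟨b2, hb2, _⟩
        · rfl
        · rw [he] at hb2; exact absurd hb2.symm (Finset.singleton_ne_empty b2)
      · rcases hcase2 with ⟨he2, _⟩ | ⟨b2, hb2, hsub2⟩
        · rw [he2] at hb; exact absurd hb.symm (Finset.singleton_ne_empty b)
        · have hbb : b = b2 := by
            rw [hb] at hb2; exact Finset.singleton_injective hb2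
          subst hbb
          rcases hsub with ⟨h1, rfl⟩ | ⟨h1, rfl⟩ | ⟨rfl, _, rfl⟩ <;>
            rcases hsub2 with ⟨h2, rfl⟩ | ⟨h2, rfl⟩ | ⟨he2, _, rfl⟩ <;> omega

lemma TS_seed {t : ℕ → ℕ} {lam : ℕ} {A : Finset ℕ} {v : ℕ} (hv : v ∈ A) :
    TS t lam A v 0 := Or.inl ⟨hv, rfl⟩

lemma TS_pos {t : ℕ → ℕ} {lam : ℕ} {A : Finset ℕ} {v a : ℕ}
    (h : TS t lam A v a) (hv : v ∉ A) : 1 ≤ a := by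
  rcases h with ⟨hv', _⟩ | ⟨_, s, s', hc, hs, hs', hcase⟩
  · exact absurd hv' hv
  · rcases hcase with ⟨_, rfl⟩ | ⟨b, _, ⟨h1, rfl⟩ | ⟨h1, rfl⟩ | ⟨rfl, _, rfl⟩⟩ <;> omega

lemma TS_zero_iff {t : ℕ → ℕ} {lam : ℕ} {A : Finset ℕ} {v a : ℕ}
    (h : TS t lam A v a) : a = 0 ↔ v ∈ A := by
  constructor
  · rintro rfl
    by_contra hv
    have := TS_pos h hv; omega
  · intro hv; exact TS_unique h (TS_seed hv)

lemma exists_consec {A : Finset ℕ} {m v : ℕ} (h0 : 0 ∈ A) (h1 : m - 1 ∈ A)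
    (hv : v < m) (hvA : v ∉ A) : ∃ s s', consec A s s' ∧ s < v ∧ v < s' := by
  have hv0 : 0 < v := by
    rcases Nat.eq_zero_or_pos v with rfl | h
    · exact absurd h0 hvA
    · exact h
  have hvm : v < m - 1 := by
    rcases Nat.lt_or_ge v (m-1) with h | h
    · exact h
    · have : v = m - 1 := by omega
      subst this; exact absurd h1 hvA
  have hne1 : (A.filter (· < v)).Nonempty := ⟨0, by simp [h0, hv0]⟩
  have hne2 : (A.filter (v < ·)).Nonempty := ⟨m-1, by simp [h1, hvm]⟩
  set s := (A.filter (· < v)).max' hne1 with hs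
  set s' := (A.filter (v < ·)).min' hne2 with hs'
  have hsm := (A.filter (· < v)).max'_mem hne1
  have hs'm := (A.filter (v < ·)).min'_mem hne2
  rw [Finset.mem_filter] at hsm hs'm
  refine ⟨s, s', ⟨hsm.1, hs'm.1, by omega, ?_⟩, hsm.2, hs'm.2⟩
  intro x hx
  rcases Nat.lt_or_ge x v with h | h
  · left
    exact Finset.le_max' (A.filter (· < v)) x (Finset.mem_filter.2 ⟨hx, h⟩)
  · rcases Nat.eq_or_lt_of_le h with rfl | h'
    · exact absurd hx hvA
    · right
      exact Finset.min'_le (A.filter (v < ·)) x (Finset.mem_filter.2 ⟨hx, h'⟩)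

/-- Adjacent non-seed shares segment on the left. -/
lemma consec_of_adjacent {A : Finset ℕ} {s s' u : ℕ} (hc : consec A s s')
    (hu : u ∉ A) (h1 : s < u) (h2 : u < s') : s < u ∧ u < s' := ⟨h1, h2⟩

section Core
variable {t : ℕ → ℕ} {lam : ℕ} {A : Finset ℕ} {m : ℕ}

lemma TS_empty {v s s' : ℕ} (hv : v ∉ A) (hc : consec A s s') (h1 : s < v) (h2 : v < s')
    (he : seg2 t s s' = ∅) : TS t lam A v (min (v - s) (s' - v)) :=
  Or.inr ⟨hv, s, s', hc, h1, h2, Or.inl ⟨he, rfl⟩⟩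

lemma TS_left {v s s' b : ℕ} (hv : v ∉ A) (hc : consec A s s') (h1 : s < v) (h2 : v < s')
    (he : seg2 t s s' = {b}) (hb : v < b) : TS t lam A v (v - s) :=
  Or.inr ⟨hv, s, s', hc, h1, h2, Or.inr ⟨b, he, Or.inl ⟨hb, rfl⟩⟩⟩

lemma TS_right {v s s' b : ℕ} (hv : v ∉ A) (hc : consec A s s') (h1 : s < v) (h2 : v < s')
    (he : seg2 t s s' = {b}) (hb : b < v) : TS t lam A v (s' - v) :=
  Or.inr ⟨hv, s, s', hc, h1, h2, Or.inr ⟨b, he, Or.inr (Or.inl ⟨hb, rfl⟩)⟩⟩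

lemma TS_mid {v s s' : ℕ} (hv : v ∉ A) (hc : consec A s s') (h1 : s < v) (h2 : v < s')
    (he : seg2 t s s' = {v}) (hw : winOK lam v s s') :
    TS t lam A v (max (v - s) (s' - v)) :=
  Or.inr ⟨hv, s, s', hc, h1, h2, Or.inr ⟨v, he, Or.inr (Or.inr ⟨rfl, hw, rfl⟩)⟩⟩

lemma seg2_singleton_facts {s s' b : ℕ} (he : seg2 t s s' = {b}) :
    s < b ∧ b < s' ∧ t b = 2 := by
  have : b ∈ seg2 t s s' := by rw [he]; exact Finset.mem_singleton_self b
  exact mem_seg2.1 this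

lemma seg_cases (hB : ∀ s s', consec A s s' → (seg2 t s s').card ≤ 1)
    {s s' : ℕ} (hc : consec A s s') :
    seg2 t s s' = ∅ ∨ ∃ b, seg2 t s s' = {b} := by
  rcases Finset.eq_empty_or_nonempty (seg2 t s s') with h | h
  · exact Or.inl h
  · right
    obtain ⟨b, hb⟩ := h
    refine ⟨b, ?_⟩
    apply Finset.eq_singleton_iff_unique_mem.2 ⟨hb, fun x hx => ?_⟩
    have := hB s s' hc
    exact Finset.card_le_one.1 this x hx b hb

/-- not-in-seg2 gives threshold 1. -/
lemma t_eq_one (ht : ∀ x < m, t x = 1 ∨ t x = 2) {v s s' : ℕ} (hvm : v < m)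
    (h1 : s < v) (h2 : v < s') (hns : v ∉ seg2 t s s') : t v = 1 := by
  rcases ht v hvm with h | h
  · exact h
  · exact absurd (mem_seg2.2 ⟨h1, h2, h⟩) hns

end Core

section Core2
variable {t : ℕ → ℕ} {lam : ℕ} {A : Finset ℕ} {m : ℕ}

lemma TS_val {u a s s' : ℕ} (hc : consec A s s') (h1 : s < u) (h2 : u < s')
    (hu : u ∉ A) (hTS : TS t lam A u a) :
    (seg2 t s s' = ∅ ∧ a = min (u - s) (s' - u)) ∨
    (∃ b, seg2 t s s' = {b} ∧
      ((u < b ∧ a = u - s) ∨ (b < u ∧ a = s' - u) ∨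
       (u = b ∧ winOK lam b s s' ∧ a = max (u - s) (s' - u)))) := by
  rcases hTS with ⟨huA, _⟩ | ⟨_, s2, s2', hc2, hs2, hs2', hcase⟩
  · exact absurd huA hu
  · obtain ⟨rfl, rfl⟩ : s = s2 ∧ s' = s2' := consec_unique hc hc2 h1 h2 hs2 hs2'
    exact hcase

lemma TS_step1 (h0 : 0 ∈ A) (h1A : m - 1 ∈ A)
    (hB : ∀ s s', consec A s s' → (seg2 t s s').card ≤ 1)
    {v u a : ℕ} (hvm : v < m) (hadj : u + 1 = v ∨ v + 1 = u)
    (htv : t v = 1) (hTS : TS t lam A u a) :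
    ∃ a', TS t lam A v a' ∧ a' ≤ a + 1 := by
  by_cases hvA : v ∈ A
  · exact ⟨0, TS_seed hvA, by omega⟩
  obtain ⟨s, s', hc, hs, hs'⟩ := exists_consec h0 h1A hvm hvA
  by_cases huA : u ∈ A
  · have ha : a = 0 := TS_unique hTS (TS_seed huA)
    have hus : u = s ∨ u = s' := by
      rcases hc.2.2.2 u huA with h | h <;> rcases hadj with h' | h' <;> omega
    rcases seg_cases hB hc with he | ⟨b, he⟩
    · exact ⟨_, TS_empty hvA hc hs hs' he, by
        rcases hadj with h' | h' <;> rcases hus with h2 | h2 <;> omega⟩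
    · obtain ⟨hb1, hb2, htb⟩ := seg2_singleton_facts he
      have hvb : v ≠ b := fun h => by rw [h] at htv; omega
      rcases Nat.lt_or_ge v b with h | h
      · exact ⟨_, TS_left hvA hc hs hs' he h, by
          rcases hadj with h' | h' <;> rcases hus with h2 | h2 <;> omega⟩
      · have hbv : b < v := by omega
        exact ⟨_, TS_right hvA hc hs hs' he hbv, by
          rcases hadj with h' | h' <;> rcases hus with h2 | h2 <;> omega⟩
  · have hu1 : u ≠ s := fun h => huA (h ▸ hc.1)
    have hu2 : u ≠ s' := fun h => huA (h ▸ hc.2.1)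
    have hus : s < u ∧ u < s' := by rcases hadj with h | h <;> omega
    rcases TS_val hc hus.1 hus.2 huA hTS with ⟨he, ha⟩ | ⟨b, he, hsub⟩
    · exact ⟨_, TS_empty hvA hc hs hs' he, by rcases hadj with h' | h' <;> omega⟩
    · obtain ⟨hb1, hb2, htb⟩ := seg2_singleton_facts he
      have hvb : v ≠ b := fun h => by rw [h] at htv; omega
      rcases Nat.lt_or_ge v b with h | h
      · refine ⟨_, TS_left hvA hc hs hs' he h, ?_⟩
        rcases hsub with ⟨h2, ha⟩ | ⟨h2, ha⟩ | ⟨h2, hw, ha⟩ <;>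
          rcases hadj with h' | h' <;> omega
      · have hbv : b < v := by omega
        refine ⟨_, TS_right hvA hc hs hs' he hbv, ?_⟩
        rcases hsub with ⟨h2, ha⟩ | ⟨h2, ha⟩ | ⟨h2, hw, ha⟩ <;>
          rcases hadj with h' | h' <;> omega

lemma TS_step2 (h0 : 0 ∈ A) (h1A : m - 1 ∈ A) (hA : ∀ x ∈ A, x < m) (hlam : 1 ≤ lam)
    (hB : ∀ s s', consec A s s' → (seg2 t s s').card ≤ 1)
    {v a1 a2 r : ℕ} (hvm : v < m) (hvA : v ∉ A) (htv : t v = 2)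
    (hT1 : TS t lam A (v - 1) a1) (hT2 : TS t lam A (v + 1) a2)
    (hr1 : a1 ≤ r) (hr2 : a2 ≤ r) (hw1 : r < a1 + lam) (hw2 : r < a2 + lam) :
    ∃ a', TS t lam A v a' ∧ a' ≤ r + 1 := by
  have hv0 : 0 < v := by
    rcases Nat.eq_zero_or_pos v with rfl | h
    · exact absurd h0 hvA
    · exact h
  obtain ⟨s, s', hc, hs, hs'⟩ := exists_consec h0 h1A hvm hvA
  have hvseg : v ∈ seg2 t s s' := mem_seg2.2 ⟨hs, hs', htv⟩
  rcases seg_cases hB hc with he | ⟨b, he⟩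
  · rw [he] at hvseg; exact absurd hvseg (Finset.notMem_empty v)
  have hvb : v = b := by rw [he] at hvseg; exact Finset.mem_singleton.1 hvseg
  subst hvb
  -- compute a1
  have ha1 : a1 = v - 1 - s := by
    by_cases h : v - 1 ∈ A
    · have : v - 1 = s := by
        rcases hc.2.2.2 (v-1) h with h' | h' <;> omega
      have := TS_unique hT1 (TS_seed h)
      omega
    · have hb1 : s < v - 1 := by
        have : v - 1 ≠ s := fun hh => h (hh ▸ hc.1)
        omega
      exact TS_unique hT1 (TS_left h hc hb1 (by omega) he (by omega))
  have ha2 : a2 = s' - (v + 1) := by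
    by_cases h : v + 1 ∈ A
    · have : v + 1 = s' := by
        rcases hc.2.2.2 (v+1) h with h' | h' <;> omega
      have := TS_unique hT2 (TS_seed h)
      omega
    · have hb2 : v + 1 < s' := by
        have : v + 1 ≠ s' := fun hh => h (hh ▸ hc.2.1)
        omega
      exact TS_unique hT2 (TS_right h hc (by omega) hb2 he (by omega))
  have hw : winOK lam v s s' := by constructor <;> omega
  exact ⟨_, TS_mid hvA hc hs hs' he hw, by omega⟩

end Core2

section Core3
variable {t : ℕ → ℕ} {lam : ℕ} {A : Finset ℕ} {m : ℕ}

lemma TS_progress (h0 : 0 ∈ A) (h1A : m - 1 ∈ A) (hA : ∀ x ∈ A, x < m) (hlam : 1 ≤ lam)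
    (ht : ∀ x < m, t x = 1 ∨ t x = 2)
    {v r : ℕ} (hvm : v < m) (hTS : TS t lam A v (r + 1)) :
    (t v = 1 ∧ ∃ u, (u + 1 = v ∨ v + 1 = u) ∧ u < m ∧ TS t lam A u r) ∨
    (t v = 2 ∧ 1 ≤ v ∧ v + 1 < m ∧ ∃ a1 a2, TS t lam A (v - 1) a1 ∧ TS t lam A (v + 1) a2 ∧
      a1 ≤ r ∧ a2 ≤ r ∧ r < a1 + lam ∧ r < a2 + lam) := by
  have hvA : v ∉ A := by
    intro h
    have := TS_unique hTS (TS_seed h); omega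
  rcases hTS with ⟨hv, _⟩ | ⟨_, s, s', hc, hs, hs', hcase⟩
  · exact absurd hv hvA
  have hs'm : s' < m := hA s' hc.2.1
  rcases hcase with ⟨he, ha⟩ | ⟨b, he, hsub⟩
  · -- empty segment
    have htv : t v = 1 := t_eq_one ht hvm hs hs' (by rw [he]; exact Finset.notMem_empty v)
    left
    refine ⟨htv, ?_⟩
    rcases le_or_gt (v - s) (s' - v) with hle | hlt
    · -- come from the left
      refine ⟨v - 1, Or.inl (by omega), by omega, ?_⟩
      by_cases h : v - 1 ∈ A
      · have hveq : v - 1 = s := by rcases hc.2.2.2 (v-1) h with h' | h' <;> omega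
        have : r = 0 := by omega
        subst this
        have : (0:ℕ) = 0 := rfl
        have hseed := TS_seed (t := t) (lam := lam) h
        exact hseed
      · have hgt : s < v - 1 := by
          have : v - 1 ≠ s := fun hh => h (hh ▸ hc.1); omega
        have := TS_empty (t := t) (lam := lam) h hc hgt (by omega) he
        have heq : min (v - 1 - s) (s' - (v - 1)) = r := by omega
        rwa [heq] at this
    · -- come from the right
      refine ⟨v + 1, Or.inr rfl, by omega, ?_⟩
      by_cases h : v + 1 ∈ A
      · have hveq : v + 1 = s' := by rcases hc.2.2.2 (v+1) h with h' | h' <;> omega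
        have : r = 0 := by omega
        subst this
        exact TS_seed h
      · have hlt2 : v + 1 < s' := by
          have : v + 1 ≠ s' := fun hh => h (hh ▸ hc.2.1); omega
        have := TS_empty (t := t) (lam := lam) h hc (by omega) hlt2 he
        have heq : min (v + 1 - s) (s' - (v + 1)) = r := by omega
        rwa [heq] at this
  · obtain ⟨hb1, hb2, htb⟩ := seg2_singleton_facts he
    rcases hsub with ⟨hvb, ha⟩ | ⟨hbv, ha⟩ | ⟨rfl, hw, ha⟩
    · -- v left of b
      have htv : t v = 1 := t_eq_one ht hvm hs hs'
        (by rw [he]; simp; omega)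
      left
      refine ⟨htv, v - 1, Or.inl (by omega), by omega, ?_⟩
      by_cases h : v - 1 ∈ A
      · have hveq : v - 1 = s := by rcases hc.2.2.2 (v-1) h with h' | h' <;> omega
        have : r = 0 := by omega
        subst this
        exact TS_seed h
      · have hgt : s < v - 1 := by
          have : v - 1 ≠ s := fun hh => h (hh ▸ hc.1); omega
        have := TS_left (t := t) (lam := lam) h hc hgt (by omega) he (by omega)
        have heq : v - 1 - s = r := by omega
        rwa [heq] at this
    · -- v right of b
      have htv : t v = 1 := t_eq_one ht hvm hs hs'
        (by rw [he]; simp; omega)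
      left
      refine ⟨htv, v + 1, Or.inr rfl, by omega, ?_⟩
      by_cases h : v + 1 ∈ A
      · have hveq : v + 1 = s' := by rcases hc.2.2.2 (v+1) h with h' | h' <;> omega
        have : r = 0 := by omega
        subst this
        exact TS_seed h
      · have hlt2 : v + 1 < s' := by
          have : v + 1 ≠ s' := fun hh => h (hh ▸ hc.2.1); omega
        have := TS_right (t := t) (lam := lam) h hc (by omega) hlt2 he (by omega)
        have heq : s' - (v + 1) = r := by omega
        rwa [heq] at this
    · -- v = b
      right
      refine ⟨htb, by omega, by omega, v - 1 - s, s' - (v + 1), ?_, ?_, by omega, by omega,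
        ?_, ?_⟩
      · by_cases h : v - 1 ∈ A
        · have hveq : v - 1 = s := by rcases hc.2.2.2 (v-1) h with h' | h' <;> omega
          have heq : v - 1 - s = 0 := by omega
          rw [heq]; exact TS_seed h
        · have hgt : s < v - 1 := by
            have : v - 1 ≠ s := fun hh => h (hh ▸ hc.1); omega
          exact TS_left h hc hgt (by omega) he (by omega)
      · by_cases h : v + 1 ∈ A
        · have hveq : v + 1 = s' := by rcases hc.2.2.2 (v+1) h with h' | h' <;> omega
          have heq : s' - (v + 1) = 0 := by omega
          rw [heq]; exact TS_seed h
        · have hlt2 : v + 1 < s' := by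
            have : v + 1 ≠ s' := fun hh => h (hh ▸ hc.2.1); omega
          exact TS_right h hc (by omega) hlt2 he (by omega)
      · rcases hw with ⟨w1, w2⟩; omega
      · rcases hw with ⟨w1, w2⟩; omega

end Core3

lemma influenced_zero (G : SimpleGraph V) [DecidableRel G.Adj] (t : V → ℕ) (lam : ℕ)
    (S : Finset V) : influenced G t lam S 0 = S := by rw [influenced]

lemma mem_image_val {m : ℕ} {S : Finset (Fin m)} {v : Fin m} :
    v.val ∈ S.image Fin.val ↔ v ∈ S := by
  constructor
  · intro h
    obtain ⟨u, hu, he⟩ := Finset.mem_image.1 h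
    rwa [show u = v from Fin.ext he] at hu
  · intro h; exact Finset.mem_image_of_mem _ h

lemma nbr_card_one {m : ℕ} {v : Fin m} {W : Finset (Fin m)} :
    1 ≤ ((pathGraph m).neighborFinset v ∩ W).card ↔
    ∃ u, u ∈ W ∧ (u.val + 1 = v.val ∨ v.val + 1 = u.val) := by
  rw [Nat.one_le_iff_ne_zero, ← Nat.pos_iff_ne_zero, Finset.card_pos]
  constructor
  · rintro ⟨u, hu⟩
    rw [Finset.mem_inter] at hu
    exact ⟨u, hu.2, mem_nbr.1 hu.1⟩
  · rintro ⟨u, hu, hadj⟩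
    exact ⟨u, Finset.mem_inter.2 ⟨mem_nbr.2 hadj, hu⟩⟩

lemma nbr_card_two {m : ℕ} {v : Fin m} {W : Finset (Fin m)}
    (h : 2 ≤ ((pathGraph m).neighborFinset v ∩ W).card) :
    ∃ u w : Fin m, u ∈ W ∧ w ∈ W ∧ u.val + 1 = v.val ∧ v.val + 1 = w.val := by
  have h' : 1 < ((pathGraph m).neighborFinset v ∩ W).card := by omega
  obtain ⟨a, ha, b, hb, hab⟩ := Finset.one_lt_card.1 h'
  rw [Finset.mem_inter] at ha hb
  have ha2 := mem_nbr.1 ha.1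
  have hb2 := mem_nbr.1 hb.1
  rcases ha2 with h1 | h1 <;> rcases hb2 with h2 | h2
  · exact absurd (Fin.ext (by omega)) hab
  · exact ⟨a, b, ha.2, hb.2, h1, h2⟩
  · exact ⟨b, a, hb.2, ha.2, h2, h1⟩
  · exact absurd (Fin.ext (by omega)) hab

lemma nbr_card_two' {m : ℕ} {v u w : Fin m} {W : Finset (Fin m)}
    (hu : u ∈ W) (hw : w ∈ W) (h1 : u.val + 1 = v.val) (h2 : v.val + 1 = w.val) :
    2 ≤ ((pathGraph m).neighborFinset v ∩ W).card := by
  have huw : u ≠ w := fun h => by rw [h] at h1; omega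
  have hsub : {u, w} ⊆ (pathGraph m).neighborFinset v ∩ W := by
    intro x hx
    rcases Finset.mem_insert.1 hx with rfl | hx
    · exact Finset.mem_inter.2 ⟨mem_nbr.2 (Or.inl h1), hu⟩
    · rw [Finset.mem_singleton] at hx; subst hx
      exact Finset.mem_inter.2 ⟨mem_nbr.2 (Or.inr h2), hw⟩
  calc 2 = ({u, w} : Finset (Fin m)).card := (Finset.card_pair huw).symm
    _ ≤ _ := Finset.card_le_card hsub

theorem influenced_eq_TS {m lam : ℕ} (hlam : 1 ≤ lam) (t : ℕ → ℕ)
    (ht : ∀ x < m, t x = 1 ∨ t x = 2) (S : Finset (Fin m))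
    (h0 : (0 : ℕ) ∈ S.image Fin.val) (h1 : (m - 1 : ℕ) ∈ S.image Fin.val)
    (hB : ∀ s s', consec (S.image Fin.val) s s' → (seg2 t s s').card ≤ 1) :
    ∀ r (v : Fin m), v ∈ influenced (pathGraph m) (fun k => t k.val) lam S r ↔
      ∃ a, TS t lam (S.image Fin.val) v.val a ∧ a ≤ r := by
  set Av := S.image Fin.val with hAv
  have hA : ∀ x ∈ Av, x < m := by
    intro x hx
    obtain ⟨u, _, rfl⟩ := Finset.mem_image.1 hx
    exact u.isLt
  intro r
  induction r using Nat.strong_induction_on with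
  | _ r IH =>
    match r with
    | 0 =>
      intro v
      rw [influenced_zero]
      constructor
      · intro hv
        exact ⟨0, TS_seed (mem_image_val.2 hv), le_refl 0⟩
      · rintro ⟨a, hTS, ha⟩
        interval_cases a
        have hv : v.val ∈ Av := by
          by_contra hc
          have := TS_pos hTS hc; omega
        exact mem_image_val.1 hv
    | r + 1 =>
      intro v
      rw [influenced_succ]
      have hAmem : ∀ u : Fin m,
          (u ∈ (if r + 1 ≤ lam then influenced (pathGraph m) (fun k => t k.val) lam S r
            else influenced (pathGraph m) (fun k => t k.val) lam S r \
              influenced (pathGraph m) (fun k => t k.val) lam S (r - lam))) ↔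
          ∃ a, TS t lam Av u.val a ∧ a ≤ r ∧ r < a + lam := by
        intro u
        split_ifs with hcase
        · rw [IH r (by omega)]
          constructor
          · rintro ⟨a, hTS, ha⟩; exact ⟨a, hTS, ha, by omega⟩
          · rintro ⟨a, hTS, ha, _⟩; exact ⟨a, hTS, ha⟩
        · rw [Finset.mem_sdiff, IH r (by omega), IH (r - lam) (by omega)]
          constructor
          · rintro ⟨⟨a, hTS, ha⟩, hnot⟩
            refine ⟨a, hTS, ha, ?_⟩
            by_contra hcon
            exact hnot ⟨a, hTS, by omega⟩
          · rintro ⟨a, hTS, ha, hwin⟩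
            refine ⟨⟨a, hTS, ha⟩, ?_⟩
            rintro ⟨a', hTS', ha'⟩
            have : a = a' := TS_unique hTS hTS'
            omega
      rw [Finset.mem_union, Finset.mem_filter]
      constructor
      · rintro (hv | ⟨_, hcard⟩)
        · obtain ⟨a, hTS, ha⟩ := (IH r (by omega) v).1 hv
          exact ⟨a, hTS, by omega⟩
        · rcases ht v.val v.isLt with htv | htv
          · rw [htv] at hcard
            obtain ⟨u, huA, hadj⟩ := nbr_card_one.1 hcard
            obtain ⟨a, hTS, ha, hwin⟩ := (hAmem u).1 huA
            obtain ⟨a', hTS', ha'⟩ := TS_step1 h0 h1 hB v.isLt hadj htv hTS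
            exact ⟨a', hTS', by omega⟩
          · rw [htv] at hcard
            obtain ⟨u, w, huA, hwA, hu1, hw1⟩ := nbr_card_two hcard
            by_cases hvS : v.val ∈ Av
            · exact ⟨0, TS_seed hvS, by omega⟩
            · obtain ⟨a1, hT1, ha1, hwin1⟩ := (hAmem u).1 huA
              obtain ⟨a2, hT2, ha2, hwin2⟩ := (hAmem w).1 hwA
              have he1 : u.val = v.val - 1 := by omega
              have he2 : w.val = v.val + 1 := by omega
              rw [he1] at hT1; rw [he2] at hT2
              obtain ⟨a', hTS', ha'⟩ := TS_step2 h0 h1 hA hlam hB v.isLt hvS htv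
                hT1 hT2 ha1 ha2 hwin1 hwin2
              exact ⟨a', hTS', ha'⟩
      · rintro ⟨a, hTS, ha⟩
        by_cases hle : a ≤ r
        · exact Or.inl ((IH r (by omega) v).2 ⟨a, hTS, hle⟩)
        · have haeq : a = r + 1 := by omega
          subst haeq
          right
          refine ⟨Finset.mem_univ v, ?_⟩
          rcases TS_progress h0 h1 hA hlam ht v.isLt hTS with
            ⟨htv, u, hadj, hum, hTSu⟩ |
            ⟨htv, hv1, hvm1, a1, a2, hT1, hT2, ha1, ha2, hwin1, hwin2⟩
          · rw [show t v.val = 1 from htv]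
            refine nbr_card_one.2 ⟨⟨u, hum⟩, ?_, ?_⟩
            · exact (hAmem ⟨u, hum⟩).2 ⟨r, hTSu, le_refl r, by omega⟩
            · simpa using hadj
          · rw [show t v.val = 2 from htv]
            refine nbr_card_two' (u := ⟨v.val - 1, by omega⟩) (w := ⟨v.val + 1, by omega⟩)
              ?_ ?_ (by simp; omega) (by simp)
            · exact (hAmem _).2 ⟨a1, hT1, ha1, hwin1⟩
            · exact (hAmem _).2 ⟨a2, hT2, ha2, hwin2⟩

lemma blocked_segment {m lam : ℕ} (t : ℕ → ℕ) (ht : ∀ x < m, t x = 1 ∨ t x = 2)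
    (S : Finset (Fin m))
    {s s' b1 b2 : ℕ} (hc : consec (S.image Fin.val) s s')
    (hb1 : b1 ∈ seg2 t s s') (hb2 : b2 ∈ seg2 t s s') (hlt : b1 < b2) :
    ∀ r (v : Fin m), v ∈ influenced (pathGraph m) (fun k => t k.val) lam S r →
      ¬(b1 ≤ v.val ∧ v.val ≤ b2) := by
  obtain ⟨hs1, hs1', ht1⟩ := mem_seg2.1 hb1
  obtain ⟨hs2, hs2', ht2⟩ := mem_seg2.1 hb2
  intro r
  induction r with
  | zero =>
    intro v hv
    rw [influenced_zero] at hv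
    have := hc.2.2.2 v.val (mem_image_val.2 hv)
    omega
  | succ r IH =>
    intro v hv
    rw [influenced_succ] at hv
    rcases Finset.mem_union.1 hv with hv | hv
    · exact IH v hv
    · obtain ⟨_, hcard⟩ := Finset.mem_filter.1 hv
      have hsub : (if r + 1 ≤ lam then influenced (pathGraph m) (fun k => t k.val) lam S r
          else influenced (pathGraph m) (fun k => t k.val) lam S r \
            influenced (pathGraph m) (fun k => t k.val) lam S (r - lam)) ⊆
          influenced (pathGraph m) (fun k => t k.val) lam S r := by
        split_ifs
        · exact Finset.Subset.refl _
        · exact Finset.sdiff_subset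
      intro hbetween
      rcases ht v.val v.isLt with htv | htv
      · -- t v = 1, so at least one active neighbor
        rw [htv] at hcard
        obtain ⟨u, huA, hadj⟩ := nbr_card_one.1 hcard
        have hu := IH u (hsub huA)
        have hv1 : v.val ≠ b1 := fun h => by rw [h] at htv; omega
        have hv2 : v.val ≠ b2 := fun h => by rw [h] at htv; omega
        omega
      · rw [htv] at hcard
        have h2 : 2 ≤ ((pathGraph m).neighborFinset v ∩ _).card := hcard
        obtain ⟨u, w, huA, hwA, hu1, hw1⟩ := nbr_card_two h2
        have hu := IH u (hsub huA)
        have hw := IH w (hsub hwA)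
        omega

theorem target_iff_valid {m lam : ℕ} (hm : 1 ≤ m) (hlam : 1 ≤ lam) (t : ℕ → ℕ)
    (ht : ∀ x < m, t x = 1 ∨ t x = 2) (S : Finset (Fin m))
    (h0 : (0 : ℕ) ∈ S.image Fin.val) (h1 : (m - 1 : ℕ) ∈ S.image Fin.val) :
    isTargetSet (pathGraph m) (fun k => t k.val) lam S ↔
      validSet t lam (S.image Fin.val) := by
  set Av := S.image Fin.val with hAv
  have hA : ∀ x ∈ Av, x < m := by
    intro x hx
    obtain ⟨u, _, rfl⟩ := Finset.mem_image.1 hx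
    exact u.isLt
  constructor
  · rintro ⟨R, hR⟩
    have hB : ∀ s s', consec Av s s' → (seg2 t s s').card ≤ 1 := by
      intro s s' hc
      by_contra hcon
      have h2 : 1 < (seg2 t s s').card := by omega
      obtain ⟨b1, hb1, b2, hb2, hne⟩ := Finset.one_lt_card.1 h2
      rcases Nat.lt_or_ge b1 b2 with hlt | hge
      · have hbm : b1 < m := by
          have := (mem_seg2.1 hb1).2.1
          have := hA s' hc.2.1
          omega
        have := blocked_segment t ht S hc hb1 hb2 hlt R ⟨b1, hbm⟩
          (by rw [hR]; exact Finset.mem_univ _)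
        simp only [show ((⟨b1, hbm⟩ : Fin m)).val = b1 from rfl] at this
        have h1' := (mem_seg2.1 hb1).1
        have := (mem_seg2.1 hb2).1
        omega
      · have hlt : b2 < b1 := by omega
        have hbm : b2 < m := by
          have := (mem_seg2.1 hb2).2.1
          have := hA s' hc.2.1
          omega
        have := blocked_segment t ht S hc hb2 hb1 hlt R ⟨b2, hbm⟩
          (by rw [hR]; exact Finset.mem_univ _)
        simp only [show ((⟨b2, hbm⟩ : Fin m)).val = b2 from rfl] at this
        omega
    intro s s' hc
    rcases seg_cases hB hc with he | ⟨b, he⟩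
    · exact Or.inl he
    · obtain ⟨hb1, hb2, htb⟩ := seg2_singleton_facts he
      have hbm : b < m := by have := hA s' hc.2.1; omega
      have hbv : (⟨b, hbm⟩ : Fin m) ∈ influenced (pathGraph m) (fun k => t k.val) lam S R := by
        rw [hR]; exact Finset.mem_univ _
      obtain ⟨a, hTS, _⟩ := (influenced_eq_TS hlam t ht S h0 h1 hB R ⟨b, hbm⟩).1 hbv
      simp only [show ((⟨b, hbm⟩ : Fin m)).val = b from rfl] at hTS
      have hbA : b ∉ Av := by
        intro hmem
        have := hc.2.2.2 b hmem
        omega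
      rcases hTS with ⟨hmem, _⟩ | ⟨_, s2, s2', hc2, hs2, hs2', hcase⟩
      · exact absurd hmem hbA
      · obtain ⟨rfl, rfl⟩ : s = s2 ∧ s' = s2' :=
          consec_unique hc hc2 hb1 hb2 hs2 hs2'
        rcases hcase with ⟨he', _⟩ | ⟨b', hb', hsub⟩
        · rw [he'] at he; exact absurd he.symm (Finset.singleton_ne_empty b)
        · have hbb : b' = b := by
            rw [he] at hb'; exact (Finset.singleton_injective hb').symm
          rcases hsub with ⟨hh, _⟩ | ⟨hh, _⟩ | ⟨_, hw, _⟩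
          · omega
          · omega
          · exact Or.inr ⟨b', hb', hw⟩
  · intro hV
    have hB : ∀ s s', consec Av s s' → (seg2 t s s').card ≤ 1 := by
      intro s s' hc
      rcases hV s s' hc with he | ⟨b, he, _⟩
      · rw [he]; simp
      · rw [he]; simp
    refine ⟨m, Finset.eq_univ_iff_forall.2 fun v => ?_⟩
    rw [influenced_eq_TS hlam t ht S h0 h1 hB m v]
    by_cases hvA : v.val ∈ Av
    · exact ⟨0, TS_seed hvA, by omega⟩
    · obtain ⟨s, s', hc, hs, hs'⟩ := exists_consec h0 h1 v.isLt hvA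
      have hs'm : s' < m := hA s' hc.2.1
      rcases hV s s' hc with he | ⟨b, he, hw⟩
      · exact ⟨_, TS_empty hvA hc hs hs' he, by omega⟩
      · obtain ⟨hb1, hb2, htb⟩ := seg2_singleton_facts he
        rcases Nat.lt_trichotomy v.val b with hlt | heq | hgt
        · exact ⟨_, TS_left hvA hc hs hs' he hlt, by omega⟩
        · subst heq
          exact ⟨_, TS_mid hvA hc hs hs' he hw, by omega⟩
        · exact ⟨_, TS_right hvA hc hs hs' he hgt, by omega⟩

/-! Transfer layer -/

lemma consec_image_iff {B : Finset ℕ} {i p q : ℕ} :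
    consec (B.image (i + ·)) p q ↔ ∃ s s', consec B s s' ∧ p = i + s ∧ q = i + s' := by
  constructor
  · rintro ⟨hp, hq, hpq, hmid⟩
    obtain ⟨s, hs, rfl⟩ := Finset.mem_image.1 hp
    obtain ⟨s', hs', rfl⟩ := Finset.mem_image.1 hq
    refine ⟨s, s', ⟨hs, hs', by omega, fun x hx => ?_⟩, rfl, rfl⟩
    have := hmid (i + x) (Finset.mem_image_of_mem _ hx)
    omega
  · rintro ⟨s, s', ⟨hs, hs', hss, hmid⟩, rfl, rfl⟩
    refine ⟨Finset.mem_image_of_mem _ hs, Finset.mem_image_of_mem _ hs', by omega,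
      fun x hx => ?_⟩
    obtain ⟨y, hy, rfl⟩ := Finset.mem_image.1 hx
    have := hmid y hy
    omega

lemma seg2_shift (T : ℕ → ℕ) (i s s' : ℕ) :
    seg2 T (i + s) (i + s') = (seg2 (fun x => T (i + x)) s s').image (i + ·) := by
  ext x
  rw [mem_seg2, Finset.mem_image]
  constructor
  · rintro ⟨h1, h2, h3⟩
    refine ⟨x - i, mem_seg2.2 ⟨by omega, by omega, ?_⟩, by omega⟩
    have : i + (x - i) = x := by omega
    rw [this]; exact h3
  · rintro ⟨y, hy, rfl⟩
    obtain ⟨h1, h2, h3⟩ := mem_seg2.1 hy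
    exact ⟨by omega, by omega, h3⟩

lemma validPair_shift {T : ℕ → ℕ} {lam i s s' : ℕ} :
    validPair (fun x => T (i + x)) lam s s' ↔ validPair T lam (i + s) (i + s') := by
  unfold validPair
  rw [seg2_shift]
  constructor
  · rintro (he | ⟨b, he, hw⟩)
    · left; rw [he]; simp
    · right
      exact ⟨i + b, by rw [he]; simp, by unfold winOK at *; omega⟩
  · rintro (he | ⟨b, he, hw⟩)
    · left; exact Finset.image_eq_empty.1 he
    · right
      have hinj : Function.Injective (i + ·) := fun a b h => by simpa using h
      have hb : b ∈ (seg2 (fun x => T (i + x)) s s').image (i + ·) := by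
        rw [he]; exact Finset.mem_singleton_self b
      obtain ⟨y, hy, rfl⟩ := Finset.mem_image.1 hb
      refine ⟨y, ?_, by unfold winOK at *; omega⟩
      apply Finset.eq_singleton_iff_unique_mem.2 ⟨hy, fun x hx => ?_⟩
      have : i + x ∈ (seg2 (fun x => T (i + x)) s s').image (i + ·) :=
        Finset.mem_image_of_mem _ hx
      rw [he, Finset.mem_singleton] at this
      omega

lemma validSet_shift {T : ℕ → ℕ} {lam i : ℕ} {B : Finset ℕ} :
    validSet (fun x => T (i + x)) lam B ↔ validSet T lam (B.image (i + ·)) := by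
  constructor
  · intro h p q hc
    obtain ⟨s, s', hc', rfl, rfl⟩ := consec_image_iff.1 hc
    exact validPair_shift.1 (h s s' hc')
  · intro h s s' hc
    exact validPair_shift.2 (h (i + s) (i + s') (consec_image_iff.2 ⟨s, s', hc, rfl, rfl⟩))

def okSets (n lam : ℕ) (T : ℕ → ℕ) (i : ℕ) : Set ℕ :=
  {c | ∃ A : Finset ℕ, i ∈ A ∧ (n - 1) ∈ A ∧ (∀ x ∈ A, i ≤ x ∧ x ≤ n - 1) ∧
    validSet T lam A ∧ A.card = c}

lemma sigma_eq (n lam : ℕ) (hlam : 1 ≤ lam) (t : Fin n → ℕ)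
    (htv : ∀ v, t v = 1 ∨ t v = 2) (i : ℕ) (hi : i < n) :
    sigmaMin n lam t i hi = sInf (okSets n lam (fun x => if h : x < n then t ⟨x, h⟩ else 1) i) := by
  set T : ℕ → ℕ := fun x => if h : x < n then t ⟨x, h⟩ else 1 with hT
  set m := n - i with hm
  have hm1 : 1 ≤ m := by omega
  have hfun : (fun k : Fin m => t ⟨i + (k : ℕ), by have := k.isLt; omega⟩) =
      (fun k : Fin m => (fun x => T (i + x)) k.val) := by
    funext k
    have hk : i + k.val < n := by have := k.isLt; omega
    simp only [hT, dif_pos hk]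
  have hts : ∀ x < m, (fun x => T (i + x)) x = 1 ∨ (fun x => T (i + x)) x = 2 := by
    intro x hx
    have hk : i + x < n := by omega
    simp only [hT, dif_pos hk]
    exact htv _
  unfold sigmaMin
  congr 1
  ext c
  simp only [Set.mem_setOf_eq, okSets]
  constructor
  · rintro ⟨S, htarget, hS0, hS1, hcard⟩
    refine ⟨S.image (fun k => i + k.val), ?_, ?_, ?_, ?_, ?_⟩
    · refine Finset.mem_image.2 ⟨⟨0, by omega⟩, hS0, by simp⟩
    · refine Finset.mem_image.2 ⟨⟨n - i - 1, by omega⟩, hS1, ?_⟩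
      show i + (n - i - 1) = n - 1
      omega
    · intro x hx
      obtain ⟨k, _, rfl⟩ := Finset.mem_image.1 hx
      have := k.isLt; omega
    · have h0' : (0 : ℕ) ∈ S.image Fin.val :=
        Finset.mem_image.2 ⟨⟨0, by omega⟩, hS0, rfl⟩
      have h1' : (m - 1 : ℕ) ∈ S.image Fin.val :=
        Finset.mem_image.2 ⟨⟨n - i - 1, by omega⟩, hS1, rfl⟩
      rw [hfun] at htarget
      have hvalid := (target_iff_valid hm1 hlam _ hts S h0' h1').1 htarget
      have := validSet_shift.1 hvalid
      rwa [Finset.image_image] at this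
    · rw [← hcard]
      apply Finset.card_image_of_injective
      intro a b hab
      have hab' : i + a.val = i + b.val := hab
      exact Fin.ext (by omega)
  · rintro ⟨A, hiA, hnA, hbound, hvalid, hcard⟩
    have hbnd : ∀ x ∈ A.image (· - i), x < m := by
      intro x hx
      obtain ⟨y, hy, rfl⟩ := Finset.mem_image.1 hx
      have := hbound y hy; omega
    refine ⟨(A.image (· - i)).attachFin hbnd, ?_, ?_, ?_, ?_⟩
    · -- image val = A.image (· - i)
      have himval : ((A.image (· - i)).attachFin hbnd).image Fin.val = A.image (· - i) := by
        ext x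
        rw [Finset.mem_image]
        constructor
        · rintro ⟨a, ha, rfl⟩
          exact (Finset.mem_attachFin hbnd).1 ha
        · intro hx
          exact ⟨⟨x, hbnd x hx⟩, (Finset.mem_attachFin hbnd).2 hx, rfl⟩
      have hAeq : (A.image (· - i)).image (i + ·) = A := by
        ext x
        rw [Finset.mem_image]
        constructor
        · rintro ⟨y, hy, rfl⟩
          obtain ⟨z, hz, rfl⟩ := Finset.mem_image.1 hy
          have := hbound z hz
          have : i + (z - i) = z := by omega
          rwa [this]
        · intro hx
          exact ⟨x - i, Finset.mem_image_of_mem _ hx, by have := hbound x hx; omega⟩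
      rw [hfun]
      apply (target_iff_valid hm1 hlam _ hts _ ?_ ?_).2
      · rw [himval]
        apply validSet_shift.2
        rw [hAeq]
        exact hvalid
      · rw [himval]
        exact Finset.mem_image.2 ⟨i, hiA, by omega⟩
      · rw [himval]
        refine Finset.mem_image.2 ⟨n - 1, hnA, by omega⟩
    · apply (Finset.mem_attachFin hbnd).2
      show (0 : ℕ) ∈ A.image (· - i)
      exact Finset.mem_image.2 ⟨i, hiA, by omega⟩
    · apply (Finset.mem_attachFin hbnd).2
      show (m - 1 : ℕ) ∈ A.image (· - i)
      exact Finset.mem_image.2 ⟨n - 1, hnA, by omega⟩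
    · rw [Finset.card_attachFin, ← hcard]
      apply Finset.card_image_of_injOn
      intro a ha b hb hab
      have hab' : a - i = b - i := hab
      have := hbound a ha; have := hbound b hb
      omega

/-! Surgery lemmas -/

lemma validSet_singleton (t : ℕ → ℕ) (lam x : ℕ) : validSet t lam {x} := by
  rintro s s' ⟨hs, hs', hlt, _⟩
  rw [Finset.mem_singleton] at hs hs'
  omega

lemma validSet_Icc (t : ℕ → ℕ) (lam a b : ℕ) : validSet t lam (Finset.Icc a b) := by
  rintro s s' ⟨hs, hs', hlt, hmid⟩
  rw [Finset.mem_Icc] at hs hs'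
  have hs1 : s' = s + 1 := by
    have h1 := hmid (s+1) (Finset.mem_Icc.2 ⟨by omega, by omega⟩)
    omega
  left
  apply Finset.eq_empty_iff_forall_notMem.2
  intro x hx
  rw [mem_seg2] at hx
  omega

lemma validSet_insert_min {t : ℕ → ℕ} {lam x : ℕ} {B : Finset ℕ} (hne : B.Nonempty)
    (hx : ∀ y ∈ B, x < y) (hB : validSet t lam B)
    (hp : validPair t lam x (B.min' hne)) : validSet t lam (insert x B) := by
  rintro s s' ⟨hs, hs', hlt, hmid⟩
  rcases Finset.mem_insert.1 hs with rfl | hsB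
  · have hs'B : s' ∈ B := by
      rcases Finset.mem_insert.1 hs' with rfl | h
      · omega
      · exact h
    have hmin : s' = B.min' hne := by
      have h1 : B.min' hne ∈ insert s B := Finset.mem_insert_of_mem (B.min'_mem hne)
      have h2 := hmid _ h1
      have h3 : s < B.min' hne := hx _ (B.min'_mem hne)
      have h4 : B.min' hne ≤ s' := Finset.min'_le _ _ hs'B
      omega
    rw [hmin]; exact hp
  · have hs'B : s' ∈ B := by
      rcases Finset.mem_insert.1 hs' with rfl | h
      · exact absurd (hx s hsB) (by omega)
      · exact h
    exact hB s s' ⟨hsB, hs'B, hlt, fun y hy => hmid y (Finset.mem_insert_of_mem hy)⟩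

lemma validSet_filter_gt {t : ℕ → ℕ} {lam d : ℕ} {A : Finset ℕ}
    (hA : validSet t lam A) : validSet t lam (A.filter (fun x => d < x)) := by
  rintro s s' ⟨hs, hs', hlt, hmid⟩
  rw [Finset.mem_filter] at hs hs'
  apply hA s s'
  refine ⟨hs.1, hs'.1, hlt, fun y hy => ?_⟩
  by_cases h : d < y
  · exact hmid y (Finset.mem_filter.2 ⟨hy, h⟩)
  · left
    have := hs.2
    omega

/-! Final theorem -/


/-- for every threshold-2 vertex `k` of the path (with `d = D[k]`
the next threshold-2 vertex), there is an integer `σ` such that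
`Σ(i) ∈ {σ, σ − 1}` for all `k ≤ i ≤ D[k]`. -/
theorem stmt11 (n lam : ℕ) (hn : 2 ≤ n) (hlam : 1 ≤ lam) (t : Fin n → ℕ)
    (htv : ∀ v, t v = 1 ∨ t v = 2)
    (h0 : t ⟨0, by omega⟩ = 2) (hlast : t ⟨n - 1, by omega⟩ = 2)
    (k d : Fin n) (htk : t k = 2) (hkd : k < d) (htd : t d = 2)
    (hbet : ∀ x : Fin n, k < x → x < d → t x = 1) :
    ∃ σ : ℕ, ∀ (i : ℕ) (hi : i < n), (k : ℕ) ≤ i → i ≤ (d : ℕ) →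
      sigmaMin n lam t i hi = σ ∨ sigmaMin n lam t i hi = σ - 1 := by
  set T : ℕ → ℕ := fun x => if h : x < n then t ⟨x, h⟩ else 1 with hT
  have hTval : ∀ (x : ℕ) (hx : x < n), T x = t ⟨x, hx⟩ := by
    intro x hx
    simp only [hT, dif_pos hx]
  have hkd' : k.val < d.val := hkd
  have hdn : d.val < n := d.isLt
  have hTd : T d.val = 2 := by
    rw [hTval d.val d.isLt]
    rw [Fin.eta]
    exact htd
  have hTn1 : T (n-1) = 2 := by
    rw [hTval (n-1) (by omega)]
    exact hlast
  -- the middle is threshold 1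
  have hmid1 : ∀ x : ℕ, k.val < x → x < d.val → T x = 1 := by
    intro x hx1 hx2
    have hxn : x < n := by omega
    rw [hTval x hxn]
    exact hbet ⟨x, hxn⟩ (by rw [Fin.lt_def]; exact hx1) (by rw [Fin.lt_def]; exact hx2)
  have hdn1 : d.val ≤ n - 1 := by omega
  -- nonemptiness of okSets
  have hok_ne : ∀ j : ℕ, j ≤ n - 1 → (okSets n lam T j).Nonempty := by
    intro j hj
    refine ⟨(Finset.Icc j (n-1)).card, Finset.Icc j (n-1), ?_, ?_, ?_, ?_, rfl⟩
    · exact Finset.mem_Icc.2 ⟨le_refl j, hj⟩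
    · exact Finset.mem_Icc.2 ⟨hj, le_refl _⟩
    · intro x hx; exact Finset.mem_Icc.1 hx
    · exact validSet_Icc T lam j (n-1)
  set D := sInf (okSets n lam T d.val) with hD
  refine ⟨D + 1, ?_⟩
  intro i hi hki hid
  rw [sigma_eq n lam hlam t htv i hi, ← hT]
  rcases eq_or_lt_of_le hid with heq | hlt
  · right
    rw [heq, ← hD]
    omega
  · -- i < d.val : show D ≤ Sig i ≤ D + 1
    obtain ⟨Ad, hd1, hd2, hdb, hdv, hdc⟩ := Nat.sInf_mem (hok_ne d.val hdn1)
    rw [← hD] at hdc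
    -- upper bound
    have hiAd : i ∉ Ad := fun h => by have := (hdb i h).1; omega
    have hneAd : Ad.Nonempty := ⟨d.val, hd1⟩
    have hminAd : Ad.min' hneAd = d.val :=
      le_antisymm (Finset.min'_le _ _ hd1) (Finset.le_min' _ _ _ fun y hy => (hdb y hy).1)
    have hpair1 : validPair T lam i (Ad.min' hneAd) := by
      rw [hminAd]
      left
      apply Finset.eq_empty_iff_forall_notMem.2
      intro x hx
      rw [mem_seg2] at hx
      have := hmid1 x (by omega) hx.2.1
      omega
    have hupper : sInf (okSets n lam T i) ≤ D + 1 := by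
      apply Nat.sInf_le
      refine ⟨insert i Ad, Finset.mem_insert_self _ _, Finset.mem_insert_of_mem hd2, ?_, ?_, ?_⟩
      · intro x hx
        rcases Finset.mem_insert.1 hx with rfl | hx
        · omega
        · have := hdb x hx; omega
      · exact validSet_insert_min hneAd (fun y hy => by have := (hdb y hy).1; omega) hdv hpair1
      · rw [Finset.card_insert_of_notMem hiAd, hdc]
    -- lower bound
    obtain ⟨Ai, hi1, hi2, hib, hiv, hic⟩ := Nat.sInf_mem (hok_ne i (by omega))
    have hlower : D ≤ sInf (okSets n lam T i) := by
      rw [← hic]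
      by_cases hdeq : d.val = n - 1
      · -- D ≤ 1 ≤ card Ai
        have hD1 : D ≤ 1 := by
          apply Nat.sInf_le
          refine ⟨{d.val}, Finset.mem_singleton_self _, by rw [hdeq]; exact Finset.mem_singleton_self _,
            ?_, validSet_singleton T lam d.val, Finset.card_singleton _⟩
          intro x hx
          rw [Finset.mem_singleton] at hx
          omega
        have : 0 < Ai.card := Finset.card_pos.2 ⟨i, hi1⟩
        omega
      · have hdlt : d.val < n - 1 := by omega
        set B := Ai.filter (fun x => d.val < x) with hB
        have hnB : (n - 1) ∈ B := Finset.mem_filter.2 ⟨hi2, by omega⟩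
        have hneB : B.Nonempty := ⟨_, hnB⟩
        have hgB : ∀ y ∈ B, d.val < y := fun y hy => (Finset.mem_filter.1 hy).2
        have hgA : ∀ y ∈ B, y ∈ Ai := fun y hy => (Finset.mem_filter.1 hy).1
        set g := B.min' hneB with hg
        have hgmem := B.min'_mem hneB
        have hpair2 : validPair T lam d.val g := by
          by_cases hdA : d.val ∈ Ai
          · apply hiv d.val g
            refine ⟨hdA, hgA g hgmem, hgB g hgmem, fun y hy => ?_⟩
            by_cases h : d.val < y
            · right; exact Finset.min'_le _ _ (Finset.mem_filter.2 ⟨hy, h⟩)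
            · left; omega
          · have hsjne : (Ai.filter (· ≤ d.val)).Nonempty := ⟨i, Finset.mem_filter.2 ⟨hi1, by omega⟩⟩
            set sj := (Ai.filter (· ≤ d.val)).max' hsjne with hsj
            have hsjm := (Ai.filter (· ≤ d.val)).max'_mem hsjne
            rw [← hsj, Finset.mem_filter] at hsjm
            have hsjd : sj < d.val := by
              have hne : sj ≠ d.val := by
                intro h
                exact hdA (h ▸ hsjm.1)
              have := hsjm.2
              omega
            have hcsg : consec Ai sj g := by
              refine ⟨hsjm.1, hgA g hgmem, by have := hgB g hgmem; omega, fun y hy => ?_⟩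
              by_cases h : d.val < y
              · right; exact Finset.min'_le _ _ (Finset.mem_filter.2 ⟨hy, h⟩)
              · left
                exact Finset.le_max' _ _ (Finset.mem_filter.2 ⟨hy, by omega⟩)
            have hvp := hiv sj g hcsg
            have hdseg : d.val ∈ seg2 T sj g := mem_seg2.2 ⟨hsjd, hgB g hgmem, hTd⟩
            left
            apply Finset.eq_empty_iff_forall_notMem.2
            intro x hx
            rw [mem_seg2] at hx
            have hxseg : x ∈ seg2 T sj g := mem_seg2.2 ⟨by omega, hx.2.1, hx.2.2⟩
            rcases hvp with he | ⟨b, he, _⟩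
            · rw [he] at hdseg; exact absurd hdseg (Finset.notMem_empty _)
            · rw [he, Finset.mem_singleton] at hdseg hxseg
              omega
        have hdB : d.val ∉ B := fun h => by have := hgB _ h; omega
        have hsubB : B ⊆ Ai.erase i := by
          intro y hy
          apply Finset.mem_erase.2
          exact ⟨by have := hgB y hy; omega, hgA y hy⟩
        have hcardB : B.card ≤ Ai.card - 1 := by
          calc B.card ≤ (Ai.erase i).card := Finset.card_le_card hsubB
            _ = Ai.card - 1 := Finset.card_erase_of_mem hi1
        have hDle : D ≤ (insert d.val B).card := by
          apply Nat.sInf_le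
          refine ⟨insert d.val B, Finset.mem_insert_self _ _,
            Finset.mem_insert_of_mem hnB, ?_, ?_, rfl⟩
          · intro x hx
            rcases Finset.mem_insert.1 hx with rfl | hx
            · omega
            · have h1 := hgB x hx
              have h2 := (hib x (hgA x hx)).2
              omega
          · exact validSet_insert_min hneB hgB (validSet_filter_gt hiv) hpair2
        have hcins : (insert d.val B).card = B.card + 1 :=
          Finset.card_insert_of_notMem hdB
        have hpos : 0 < Ai.card := Finset.card_pos.2 ⟨i, hi1⟩
        omega
    omega
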